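/- Let (x_i, y_i) ∈ ℝ² × ℝ², i = 1,…,m, be given. Suppose there is a real 3×3 matrix F of rank two with ŷ_iᵀ F x̂_i = 0 for all i, and a nonzero vector e₂ ∈ ker(Fᵀ), such that each (x_i,y_i) is ([e₂]_× F, e₂)-regular. Then there exist a finite camera P₂ non-coincident with P₁ = (I 0) and points w_i ∈ ℝ³ such that P₁ŵ_i is a nonzero scalar multiple of x̂_i and P₂ŵ_i is a nonzero scalar multiple of ŷ_i for all i = 1,…,m. -/

import Mathlib

open Matrix

noncomputable section

/-- For `u ∈ ℝⁿ`, `hat u = (u, 1)ᵀ ∈ ℝⁿ⁺¹`. -/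
def hat {n : ℕ} (u : Fin n → ℝ) : Fin (n + 1) → ℝ := Fin.snoc u 1

/-- The 3×4 matrix `(A b)` with left 3×3 block `A` and last column `b`. -/
def cam (A : Matrix (Fin 3) (Fin 3) ℝ) (b : Fin 3 → ℝ) : Matrix (Fin 3) (Fin 4) ℝ :=
  Matrix.of fun i => Fin.snoc (A i) (b i)

/-- The left 3×3 block of a 3×4 matrix. -/
def leftBlock (P : Matrix (Fin 3) (Fin 4) ℝ) : Matrix (Fin 3) (Fin 3) ℝ :=
  P.submatrix id Fin.castSucc

/-- A (projective) camera is a real 3×4 matrix of rank 3. -/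
def IsCamera (P : Matrix (Fin 3) (Fin 4) ℝ) : Prop := P.rank = 3

/-- A finite camera: the left 3×3 block is nonsingular. -/
def IsFiniteCamera (P : Matrix (Fin 3) (Fin 4) ℝ) : Prop := IsUnit (leftBlock P).det

/-- Two cameras are coincident if their camera centers agree up to a nonzero scale;
for rank-3 cameras the center is the (one-dimensional) kernel, so this says the two
cameras share a common nonzero kernel vector. -/
def Coincident (P Q : Matrix (Fin 3) (Fin 4) ℝ) : Prop :=
  ∃ c : Fin 4 → ℝ, c ≠ 0 ∧ P.mulVec c = 0 ∧ Q.mulVec c = 0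

/-- `u` is a nonzero scalar multiple of `v`. -/
def SimEq {n : ℕ} (u v : Fin n → ℝ) : Prop := ∃ c : ℝ, c ≠ 0 ∧ u = c • v

/-- The skew-symmetric matrix `[v]ₓ` with `[v]ₓ w = v × w`. -/
def skew (v : Fin 3 → ℝ) : Matrix (Fin 3) (Fin 3) ℝ :=
  !![0, -v 2, v 1; v 2, 0, -v 0; -v 1, v 0, 0]

/-- `(x, y)` is `(A, b)`-irregular. -/
def Irregular (A : Matrix (Fin 3) (Fin 3) ℝ) (b : Fin 3 → ℝ) (x y : Fin 2 → ℝ) : Prop :=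
  ((skew b * A).mulVec (hat x) = 0 ∧ Matrix.vecMul (hat y) (skew b) ≠ 0) ∨
  ((skew b * A).mulVec (hat x) ≠ 0 ∧ Matrix.vecMul (hat y) (skew b) = 0)

-- ===== auxiliary lemmas =====
open Polynomial in
private lemma curve_poly_ne_zero (a : Fin 3 → ℝ) (ha : a ≠ 0) (c : ℝ) :
    (C (-c) + C (a 0) * X + C (a 1) * X ^ 2 + C (a 2) * X ^ 3 : ℝ[X]) ≠ 0 := by
  intro h
  apply ha
  have h1 := congrArg (fun p => Polynomial.coeff p 1) h
  have h2 := congrArg (fun p => Polynomial.coeff p 2) h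
  have h3 := congrArg (fun p => Polynomial.coeff p 3) h
  simp [coeff_add, coeff_C, coeff_X, coeff_C_mul, coeff_X_pow] at h1 h2 h3
  funext i
  fin_cases i <;> simp [h1, h2, h3]

open Polynomial in
private lemma avoid (m : ℕ) (a : Fin m → Fin 3 → ℝ) (c : Fin m → ℝ) (ha : ∀ i, a i ≠ 0)
    (k : Fin 3 → ℝ) (hk : k ≠ 0) :
    ∃ v : Fin 3 → ℝ, v ⬝ᵥ k ≠ 0 ∧ ∀ i, v ⬝ᵥ a i ≠ c i := by
  classical
  set q : (Fin 3 → ℝ) → ℝ → ℝ[X] :=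
    fun w r => C (-r) + C (w 0) * X + C (w 1) * X ^ 2 + C (w 2) * X ^ 3 with hq
  have hB : (({t | (q k 0).IsRoot t} ∪ ⋃ i, {t | (q (a i) (c i)).IsRoot t}) : Set ℝ).Finite := by
    refine Set.Finite.union (Polynomial.finite_setOf_isRoot (curve_poly_ne_zero k hk 0)) ?_
    exact Set.finite_iUnion fun i =>
      Polynomial.finite_setOf_isRoot (curve_poly_ne_zero (a i) (ha i) (c i))
  obtain ⟨t, ht⟩ := (Set.Finite.infinite_compl hB).nonempty
  simp only [Set.mem_compl_iff, Set.mem_union, Set.mem_iUnion, Set.mem_setOf_eq, not_or,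
    not_exists] at ht
  refine ⟨![t, t ^ 2, t ^ 3], ?_, fun i => ?_⟩
  · intro h
    apply ht.1
    simp only [hq, IsRoot, eval_add, eval_mul, eval_C, eval_X, eval_pow]
    simp [dotProduct, Fin.sum_univ_three] at h
    linarith [h]
  · intro h
    apply ht.2 i
    simp only [hq, IsRoot, eval_add, eval_mul, eval_C, eval_X, eval_pow]
    simp [dotProduct, Fin.sum_univ_three] at h
    linarith [h]

/-- cross product as `skew` applied to a vector -/
private def cr (a b : Fin 3 → ℝ) : Fin 3 → ℝ := (skew a).mulVec b

private lemma dot_cr_left (a b : Fin 3 → ℝ) : a ⬝ᵥ cr a b = 0 := by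
  simp [cr, skew, mulVec, dotProduct, Fin.sum_univ_three]; ring

private lemma dot_cr_right (a b : Fin 3 → ℝ) : b ⬝ᵥ cr a b = 0 := by
  simp [cr, skew, mulVec, dotProduct, Fin.sum_univ_three]; ring

private lemma tri (a b c : Fin 3 → ℝ) : cr (cr a b) c = (a ⬝ᵥ c) • b - (b ⬝ᵥ c) • a := by
  funext i
  fin_cases i <;>
    simp [cr, skew, mulVec, dotProduct, Fin.sum_univ_three] <;> ring

private lemma tri' (a b : Fin 3 → ℝ) : cr a (cr a b) = (a ⬝ᵥ b) • a - (a ⬝ᵥ a) • b := by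
  funext i
  fin_cases i <;>
    simp [cr, skew, mulVec, dotProduct, Fin.sum_univ_three] <;> ring

private lemma cr_smul_left (s : ℝ) (a b : Fin 3 → ℝ) : cr (s • a) b = s • cr a b := by
  funext i
  fin_cases i <;>
    simp [cr, skew, mulVec, dotProduct, Fin.sum_univ_three] <;> ring

private lemma lagrange (a b : Fin 3 → ℝ) :
    cr a b ⬝ᵥ cr a b = (a ⬝ᵥ a) * (b ⬝ᵥ b) - (a ⬝ᵥ b) ^ 2 := by
  simp [cr, skew, mulVec, dotProduct, Fin.sum_univ_three]; ring

private lemma vecMul_skew (y e : Fin 3 → ℝ) : Matrix.vecMul y (skew e) = -cr e y := by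
  funext i
  fin_cases i <;>
    simp [cr, skew, mulVec, vecMul, dotProduct, Fin.sum_univ_three] <;> ring

private lemma dot_self_nonneg3 (a : Fin 3 → ℝ) : 0 ≤ a ⬝ᵥ a := by
  simp only [dotProduct, Fin.sum_univ_three]
  nlinarith [sq_nonneg (a 0), sq_nonneg (a 1), sq_nonneg (a 2)]

private lemma dot_self_pos3 {a : Fin 3 → ℝ} (h : a ≠ 0) : 0 < a ⬝ᵥ a :=
  lt_of_le_of_ne (dot_self_nonneg3 a)
    (fun h' => h (dotProduct_self_eq_zero.mp h'.symm))

private lemma eq_zero_of_cr (a : Fin 3 → ℝ) {b : Fin 3 → ℝ} (hb : b ≠ 0) (h1 : cr b a = 0)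
    (h2 : b ⬝ᵥ a = 0) : a = 0 := by
  have hl := lagrange b a
  rw [h1, h2] at hl
  simp only [dotProduct_zero, zero_dotProduct] at hl
  have hb' := dot_self_pos3 hb
  have ha : a ⬝ᵥ a = 0 := by nlinarith
  exact dotProduct_self_eq_zero.mp ha

private lemma cr_ne_zero {e g : Fin 3 → ℝ} (he : e ≠ 0) (hg : g ≠ 0) (h : e ⬝ᵥ g = 0) :
    cr e g ≠ 0 := fun hc => hg (eq_zero_of_cr g he hc h)

private lemma cam_mulVec (A : Matrix (Fin 3) (Fin 3) ℝ) (b w : Fin 3 → ℝ) :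
    (cam A b).mulVec (hat w) = A.mulVec w + b := by
  funext i
  simp only [cam, hat, mulVec, dotProduct, Matrix.of_apply, Fin.sum_univ_castSucc,
    Fin.snoc_castSucc, Fin.snoc_last, Pi.add_apply, mul_one]

private lemma hat_ne_zero {n : ℕ} (u : Fin n → ℝ) : hat u ≠ 0 := by
  intro h
  have := congrFun h (Fin.last n)
  simp [hat] at this

private lemma ker_spanning (F : Matrix (Fin 3) (Fin 3) ℝ) (hF : F.rank = 2) :
    ∃ k : Fin 3 → ℝ, k ≠ 0 ∧ F.mulVec k = 0 ∧
      ∀ z : Fin 3 → ℝ, F.mulVec z = 0 → ∃ t : ℝ, z = t • k := by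
  have hrn := LinearMap.finrank_range_add_finrank_ker F.mulVecLin
  rw [show Module.finrank ℝ (LinearMap.range F.mulVecLin) = 2 from hF] at hrn
  simp [Module.finrank_pi] at hrn
  have hker1 : Module.finrank ℝ (LinearMap.ker F.mulVecLin) = 1 := by omega
  have hnont : Nontrivial (LinearMap.ker F.mulVecLin) :=
    Module.finrank_pos_iff (R := ℝ) |>.mp (by omega)
  obtain ⟨⟨k, hkmem⟩, hkne⟩ := exists_ne (0 : LinearMap.ker F.mulVecLin)
  have hk0 : k ≠ 0 := by
    intro h; apply hkne; ext; simpa using congrFun h _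
  refine ⟨k, hk0, hkmem, fun z hz => ?_⟩
  have hzmem : z ∈ LinearMap.ker F.mulVecLin := hz
  obtain ⟨t, ht⟩ := (finrank_eq_one_iff_of_nonzero' (⟨k, hkmem⟩ : LinearMap.ker F.mulVecLin)
    (by simpa using hk0)).mp hker1 ⟨z, hzmem⟩
  exact ⟨t, by simpa using (congrArg Subtype.val ht).symm⟩
-- ===== end auxiliary lemmas =====

/-- From a fundamental matrix whose epipolar constraints hold and regularity of all point
pairs, one obtains a finite reconstruction with non-coincident cameras, the first being
`(I 0)`. -/
theorem stmt12 (m : ℕ) (x y : Fin m → Fin 2 → ℝ)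
    (F : Matrix (Fin 3) (Fin 3) ℝ) (hF : F.rank = 2)
    (hep : ∀ i, hat (y i) ⬝ᵥ F.mulVec (hat (x i)) = 0)
    (e₂ : Fin 3 → ℝ) (he : e₂ ≠ 0) (hker : Fᵀ.mulVec e₂ = 0)
    (hreg : ∀ i, ¬ Irregular (skew e₂ * F) e₂ (x i) (y i)) :
    ∃ (A : Matrix (Fin 3) (Fin 3) ℝ) (b : Fin 3 → ℝ), IsUnit A.det ∧ b ≠ 0 ∧
      ∃ w : Fin m → Fin 3 → ℝ, ∀ i,
        SimEq ((cam 1 0).mulVec (hat (w i))) (hat (x i)) ∧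
        SimEq ((cam A b).mulVec (hat (w i))) (hat (y i)) := by
  classical
  obtain ⟨k, hk0, hFk, hkspan⟩ := ker_spanning F hF
  have hee : (0:ℝ) < e₂ ⬝ᵥ e₂ := dot_self_pos3 he
  have horth : ∀ z, e₂ ⬝ᵥ F.mulVec z = 0 := by
    intro z
    rw [dotProduct_mulVec, ← Matrix.mulVec_transpose, hker]
    simp
  have hM : ∀ i, (skew e₂ * (skew e₂ * F)).mulVec (hat (x i))
      = cr e₂ (cr e₂ (F.mulVec (hat (x i)))) := by
    intro i
    rw [← Matrix.mulVec_mulVec, ← Matrix.mulVec_mulVec]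
    rfl
  have hregA : ∀ i, cr e₂ (cr e₂ (F.mulVec (hat (x i)))) = 0 → cr e₂ (hat (y i)) = 0 := by
    intro i hz
    by_contra hy
    apply hreg i
    unfold Irregular
    left
    refine ⟨by rw [hM i]; exact hz, by rw [vecMul_skew]; simpa using hy⟩
  have hregB : ∀ i, cr e₂ (cr e₂ (F.mulVec (hat (x i)))) ≠ 0 → cr e₂ (hat (y i)) ≠ 0 := by
    intro i hz hy
    apply hreg i
    unfold Irregular
    right
    refine ⟨by rw [hM i]; exact hz, by rw [vecMul_skew, hy]; simp⟩
  -- choose the vector v avoiding finitely many affine hyperplanes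
  obtain ⟨v, hvk, hva⟩ := avoid m (fun i => hat (x i))
    (fun i => ((hat (y i) ⬝ᵥ e₂) * (cr e₂ (F.mulVec (hat (x i))) ⬝ᵥ cr e₂ (F.mulVec (hat (x i)))))
      / ((hat (y i) ⬝ᵥ cr e₂ (F.mulVec (hat (x i)))) * (e₂ ⬝ᵥ e₂)))
    (fun i => hat_ne_zero _) k hk0
  set A : Matrix (Fin 3) (Fin 3) ℝ := skew e₂ * F + vecMulVec e₂ v with hAdef
  have hA : ∀ z, A.mulVec z = cr e₂ (F.mulVec z) + (v ⬝ᵥ z) • e₂ := by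
    intro z
    rw [hAdef, add_mulVec, ← Matrix.mulVec_mulVec]
    congr 1
    funext j
    simp [vecMulVec, mulVec, dotProduct, Fin.sum_univ_three]
    ring
  have hdet : IsUnit A.det := by
    rw [isUnit_iff_ne_zero]
    intro hdet0
    obtain ⟨z, hz0, hz⟩ := Matrix.exists_mulVec_eq_zero_iff.mpr hdet0
    rw [hA] at hz
    have h1 : (v ⬝ᵥ z) * (e₂ ⬝ᵥ e₂) = 0 := by
      have h2 := congrArg (fun w => e₂ ⬝ᵥ w) hz
      simp only [dotProduct_add, dotProduct_smul, dot_cr_left, smul_eq_mul, dotProduct_zero,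
        zero_add] at h2
      exact h2
    have hvz : v ⬝ᵥ z = 0 := by
      rcases mul_eq_zero.mp h1 with h | h
      · exact h
      · exact absurd h hee.ne'
    have hcr : cr e₂ (F.mulVec z) = 0 := by
      rw [hvz] at hz; simpa using hz
    have hFz : F.mulVec z = 0 := eq_zero_of_cr _ he hcr (horth z)
    obtain ⟨t, rfl⟩ := hkspan z hFz
    have htk : t * (v ⬝ᵥ k) = 0 := by
      simpa [smul_eq_mul, dotProduct, Finset.mul_sum, mul_assoc, mul_left_comm] using hvz
    have ht : t = 0 := by
      rcases mul_eq_zero.mp htk with h | h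
      · exact h
      · exact absurd h hvk
    exact hz0 (by simp [ht])
  have main : ∀ i, ∃ c d : ℝ, c ≠ 0 ∧ d ≠ 0 ∧
      c • A.mulVec (hat (x i)) + e₂ = d • hat (y i) := by
    intro i
    have hxne := hat_ne_zero (x i)
    have hyne0 := hat_ne_zero (y i)
    set xh := hat (x i) with hxhd
    set yh := hat (y i) with hyhd
    set g := F.mulVec xh with hgd
    set u := cr e₂ g with hud
    set s := v ⬝ᵥ xh with hsd
    have heg : e₂ ⬝ᵥ g = 0 := horth _
    have hue : e₂ ⬝ᵥ u = 0 := dot_cr_left _ _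
    have hAx : A.mulVec xh = u + s • e₂ := hA xh
    by_cases hg0 : g = 0
    · -- case 1 : F xh = 0
      have hu0 : u = 0 := by rw [hud, hg0]; simp [cr]
      have hyE : cr e₂ yh = 0 := hregA i (by rw [← hud, hu0]; simp [cr])
      have hye : (e₂ ⬝ᵥ e₂) • yh = (e₂ ⬝ᵥ yh) • e₂ := by
        have h3 := tri' e₂ yh
        rw [hyE] at h3
        simp only [cr, Matrix.mulVec_zero] at h3
        rw [eq_comm, sub_eq_zero] at h3
        exact h3.symm
      have h4 := congrArg (fun w => (e₂ ⬝ᵥ e₂)⁻¹ • w) hye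
      simp only [smul_smul, inv_mul_cancel₀ hee.ne', one_smul] at h4
      set r := (e₂ ⬝ᵥ e₂)⁻¹ * (e₂ ⬝ᵥ yh) with hrd
      have hyr : yh = r • e₂ := h4
      have hr0 : r ≠ 0 := by
        intro h
        rw [h, zero_smul] at hyr
        exact hyne0 hyr
      obtain ⟨t, hxk⟩ := hkspan xh hg0
      have ht0 : t ≠ 0 := by
        intro h
        rw [h, zero_smul] at hxk
        exact hxne hxk
      have hs0 : s ≠ 0 := by
        rw [hsd, hxk]
        intro h
        have : t * (v ⬝ᵥ k) = 0 := by
          simpa [dotProduct, Finset.mul_sum, smul_eq_mul, mul_assoc, mul_left_comm] using h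
        rcases mul_eq_zero.mp this with h' | h'
        · exact ht0 h'
        · exact hvk h'
      refine ⟨1 / s, 2 / r, one_div_ne_zero hs0, div_ne_zero two_ne_zero hr0, ?_⟩
      rw [hAx, hu0, zero_add, hyr, smul_smul, smul_smul, one_div,
        inv_mul_cancel₀ hs0, div_mul_cancel₀ _ hr0, one_smul, two_smul]
    · -- case 2 : F xh ≠ 0
      have hu_ne : u ≠ 0 := by rw [hud]; exact cr_ne_zero he hg0 heg
      have hcru : cr e₂ u ≠ 0 := cr_ne_zero he hu_ne hue
      have hyne : cr e₂ yh ≠ 0 := hregB i (by rw [← hud]; exact hcru)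
      have hyg : yh ⬝ᵥ g = 0 := hep i
      have hgu : g ⬝ᵥ u = 0 := by rw [hud]; exact dot_cr_right _ _
      have hgg : (0:ℝ) < g ⬝ᵥ g := dot_self_pos3 hg0
      have huu : (0:ℝ) < u ⬝ᵥ u := dot_self_pos3 hu_ne
      have hyu : yh ⬝ᵥ u ≠ 0 := by
        intro h0
        apply hyne
        have h1 : cr (cr g u) yh = 0 := by
          rw [tri, dotProduct_comm g yh, dotProduct_comm u yh, hyg, h0]
          simp
        have h2 : cr g u = (g ⬝ᵥ g) • e₂ := by
          have h4 : cr g (cr e₂ g) = -cr (cr e₂ g) g := by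
            funext j
            fin_cases j <;>
              simp [cr, skew, mulVec, dotProduct, Fin.sum_univ_three] <;> ring
          rw [hud, h4, tri e₂ g g, heg, zero_smul, zero_sub, neg_neg]
        rw [h2, cr_smul_left] at h1
        rcases smul_eq_zero.mp h1 with h | h
        · exact absurd h hgg.ne'
        · exact h
      have hD : (yh ⬝ᵥ e₂) * (u ⬝ᵥ u) - s * ((yh ⬝ᵥ u) * (e₂ ⬝ᵥ e₂)) ≠ 0 := by
        intro h
        apply hva i
        rw [← hsd, eq_div_iff (mul_ne_zero hyu hee.ne')]
        linarith
      obtain ⟨c, hcd⟩ : ∃ c : ℝ, c = (e₂ ⬝ᵥ e₂) * (yh ⬝ᵥ u)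
          / ((yh ⬝ᵥ e₂) * (u ⬝ᵥ u) - s * ((yh ⬝ᵥ u) * (e₂ ⬝ᵥ e₂))) := ⟨_, rfl⟩
      obtain ⟨d, hdd⟩ : ∃ d : ℝ, d = (u ⬝ᵥ u) * (e₂ ⬝ᵥ e₂)
          / ((yh ⬝ᵥ e₂) * (u ⬝ᵥ u) - s * ((yh ⬝ᵥ u) * (e₂ ⬝ᵥ e₂))) := ⟨_, rfl⟩
      have hc0 : c ≠ 0 := by
        rw [hcd]
        exact div_ne_zero (mul_ne_zero hee.ne' hyu) hD
      have hd0 : d ≠ 0 := by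
        rw [hdd]
        exact div_ne_zero (mul_ne_zero huu.ne' hee.ne') hD
      set V := c • u + (c * s + 1) • e₂ - d • yh with hVd
      have hVe : e₂ ⬝ᵥ V = 0 := by
        rw [hVd]
        simp only [dotProduct_sub, dotProduct_add, dotProduct_smul, smul_eq_mul, hue,
          dotProduct_comm e₂ yh, mul_zero, zero_add]
        rw [hcd, hdd]
        revert hD
        generalize yh ⬝ᵥ e₂ = YE
        generalize yh ⬝ᵥ u = YU
        generalize u ⬝ᵥ u = UU
        generalize e₂ ⬝ᵥ e₂ = EE
        intro hD
        field_simp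
        have hX : -(EE * YU * s) + YE * UU ≠ 0 := by intro h; apply hD; linarith
        linear_combination (-EE) * mul_inv_cancel₀ hX
      have hVg : g ⬝ᵥ V = 0 := by
        rw [hVd]
        simp only [dotProduct_sub, dotProduct_add, dotProduct_smul, smul_eq_mul, hgu,
          dotProduct_comm g e₂, dotProduct_comm g yh, heg, hyg]
        ring
      have hVu : u ⬝ᵥ V = 0 := by
        rw [hVd]
        simp only [dotProduct_sub, dotProduct_add, dotProduct_smul, smul_eq_mul,
          dotProduct_comm u e₂, dotProduct_comm u yh, hue, mul_zero, add_zero]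
        rw [hcd, hdd]
        revert hD
        generalize yh ⬝ᵥ e₂ = YE
        generalize yh ⬝ᵥ u = YU
        generalize u ⬝ᵥ u = UU
        generalize e₂ ⬝ᵥ e₂ = EE
        intro hD
        field_simp
        ring
      have hcrV : cr u V = 0 := by
        rw [hud, tri, hVe, hVg]
        simp
      have hV : V = 0 := eq_zero_of_cr V hu_ne hcrV hVu
      refine ⟨c, d, hc0, hd0, ?_⟩
      rw [hAx]
      have hexp : c • (u + s • e₂) + e₂ = c • u + (c * s + 1) • e₂ := by
        rw [smul_add, smul_smul, add_smul, one_smul, add_assoc]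
      rw [hexp, ← sub_eq_zero, ← hVd, hV]
  choose c d hc0 hd0 hcd using main
  refine ⟨A, e₂, hdet, he, fun i => c i • hat (x i), fun i => ?_⟩
  constructor
  · rw [cam_mulVec]
    refine ⟨c i, hc0 i, ?_⟩
    simp [Matrix.one_mulVec]
  · rw [cam_mulVec, Matrix.mulVec_smul]
    exact ⟨d i, hd0 i, hcd i⟩
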